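/- arXiv:2101.09827 — 2 statements merged into one kernel-verified Lean document; each statement's English description precedes it below -/
import Mathlib

section
/- Let Z = {z₁, z₁′, …, z_m, z_m′} be a set of m general symmetric pairs of points in ℙ¹ × ℙ¹ over ℂ (where z′ denotes the reflection (y,x) of z = (x,y) across the diagonal). If (n,m) ≠ (1,2), then the linear system of divisors in |𝒪_{ℙ¹×ℙ¹}(1,n)| passing through all points of Z has the expected projective dimension, namely max(−1, 2n + 1 − 2m) (dimension −1 meaning the system is empty). -/
/-!
# Statement 9

Let `Z = {z₁, z₁′, …, z_m, z_m′}` be a set of `m` general symmetric pairs of points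
in `ℙ¹ × ℙ¹` over `ℂ` (where `z′` denotes the reflection `(y,x)` of `z = (x,y)`
across the diagonal).  If `(n,m) ≠ (1,2)`, then the linear system of divisors in
`|𝒪_{ℙ¹×ℙ¹}(1,n)|` passing through all points of `Z` has the expected projective
dimension `max (−1) (2n + 1 − 2m)`.

Concretely: global sections of `𝒪_{ℙ¹×ℙ¹}(1,n)` are the bihomogeneous polynomials
of bidegree `(1,n)` in the coordinates `(x₀,x₁)` of the first factor (the variables
`Sum.inl _`) and `(y₀,y₁)` of the second factor (the variables `Sum.inr _`).  A
point of `ℙ¹ × ℙ¹` is represented by a pair of nonzero vectors in `ℂ²`, and the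
linear system through the points is (the projectivization of) the subspace of such
forms vanishing at representatives of the points; its projective dimension is one
less than the `ℂ`-vector space dimension, so the expected projective dimension
`max (−1) (2n+1−2m)` means vector space dimension `max 0 (2n+2−2m)`.  "General" is
spelled out: a proper Zariski-closed subset of the configuration space
`(ℙ¹ × ℙ¹)^m` is contained in the zero locus of some nonzero polynomial `F` in the
homogeneous coordinates of the points, and the conclusion holds whenever
`F` does not vanish on the chosen representatives.
-/

noncomputable section

open MvPolynomial

/-- The bidegree weight on the coordinates of `ℙ¹ × ℙ¹`: the coordinates of the
first factor have weight `(1,0)`, those of the second factor weight `(0,1)`. -/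
def bidegWeight : (Fin 2 ⊕ Fin 2) → ℕ × ℕ :=
  Sum.elim (fun _ => (1, 0)) (fun _ => (0, 1))

/-- The space of bihomogeneous forms of bidegree `(1, n)`, i.e. the space of global
sections `H⁰(ℙ¹ × ℙ¹, 𝒪(1,n))`. -/
def bidegreeForms (n : ℕ) : Submodule ℂ (MvPolynomial (Fin 2 ⊕ Fin 2) ℂ) :=
  weightedHomogeneousSubmodule ℂ bidegWeight (1, n)

/-- The linear system (as a vector subspace) of forms of bidegree `(1,n)` on
`ℙ¹ × ℙ¹` vanishing at the `m` symmetric pairs of points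
`z i = ((z i).1, (z i).2)` and `(z i)′ = ((z i).2, (z i).1)`, the points being
given by nonzero homogeneous coordinate vectors in `ℂ²`. -/
def symmetricSystem (n : ℕ) {m : ℕ} (z : Fin m → ((Fin 2 → ℂ) × (Fin 2 → ℂ))) :
    Submodule ℂ (MvPolynomial (Fin 2 ⊕ Fin 2) ℂ) :=
  bidegreeForms n ⊓
    ⨅ i : Fin m,
      (LinearMap.ker ((aeval (Sum.elim (z i).1 (z i).2) :
          MvPolynomial (Fin 2 ⊕ Fin 2) ℂ →ₐ[ℂ] ℂ).toLinearMap) ⊓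
        LinearMap.ker ((aeval (Sum.elim (z i).2 (z i).1) :
          MvPolynomial (Fin 2 ⊕ Fin 2) ℂ →ₐ[ℂ] ℂ).toLinearMap))

namespace S9
open Matrix Module

/-- exponent of the `(a,k)` basis monomial `x_a y₀^(n-k) y₁^k`. -/
def expD (n : ℕ) (c : Fin 2 × Fin (n+1)) : (Fin 2 ⊕ Fin 2) →₀ ℕ :=
  Finsupp.single (Sum.inl c.1) 1 +
    (Finsupp.single (Sum.inr 0) (n - c.2.val) + Finsupp.single (Sum.inr 1) c.2.val)

lemma weight_single (w : (Fin 2 ⊕ Fin 2) → ℕ × ℕ) (v : Fin 2 ⊕ Fin 2) (k : ℕ) :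
    Finsupp.weight w (Finsupp.single v k) = k • w v := by
  rw [Finsupp.weight_apply, Finsupp.sum_single_index]
  simp

lemma weight_expD {n : ℕ} (c : Fin 2 × Fin (n+1)) :
    Finsupp.weight bidegWeight (expD n c) = ((1 : ℕ), n) := by
  have hc : c.2.val ≤ n := Nat.lt_succ_iff.mp c.2.2
  simp only [expD, map_add, weight_single, bidegWeight]
  simp only [Sum.elim_inl, Sum.elim_inr, Prod.smul_mk, smul_eq_mul]
  ext
  · simp
  · simp only [Prod.snd_add]
    simp only [mul_zero, mul_one]
    omega

lemma expD_apply_inl {n : ℕ} (c : Fin 2 × Fin (n+1)) (b : Fin 2) :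
    expD n c (Sum.inl b) = if c.1 = b then 1 else 0 := by
  simp [expD, Finsupp.single_apply]

lemma expD_apply_inr0 {n : ℕ} (c : Fin 2 × Fin (n+1)) :
    expD n c (Sum.inr 0) = n - c.2.val := by
  simp [expD, Finsupp.single_apply]

lemma expD_apply_inr1 {n : ℕ} (c : Fin 2 × Fin (n+1)) :
    expD n c (Sum.inr 1) = c.2.val := by
  simp [expD, Finsupp.single_apply]

lemma expD_injective {n : ℕ} : Function.Injective (expD n) := by
  intro c c' h
  have h1 := DFunLike.congr_fun h (Sum.inl c.1)
  have h2 := DFunLike.congr_fun h (Sum.inr 1)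
  rw [expD_apply_inl, expD_apply_inl, if_pos rfl] at h1
  rw [expD_apply_inr1, expD_apply_inr1] at h2
  have : c.1 = c'.1 := by
    by_contra hne
    rw [if_neg (fun hh => hne hh.symm)] at h1
    exact one_ne_zero h1
  exact Prod.ext this (Fin.ext h2)

lemma exists_expD {n : ℕ} {d : (Fin 2 ⊕ Fin 2) →₀ ℕ}
    (hd : Finsupp.weight bidegWeight d = ((1 : ℕ), n)) : ∃ c, d = expD n c := by
  have hw : Finsupp.weight bidegWeight d =
      (d (Sum.inl 0) + d (Sum.inl 1), d (Sum.inr 0) + d (Sum.inr 1)) := by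
    rw [Finsupp.weight_apply, Finsupp.sum_fintype _ _ (fun v => by simp)]
    rw [Fintype.sum_sum_type]
    simp [bidegWeight, Fin.sum_univ_two, Prod.ext_iff]
  rw [hd] at hw
  have h1 := congrArg Prod.fst hw
  have h2 := congrArg Prod.snd hw
  simp only at h1 h2
  have hcase : (d (Sum.inl 0) = 1 ∧ d (Sum.inl 1) = 0) ∨
      (d (Sum.inl 0) = 0 ∧ d (Sum.inl 1) = 1) := by omega
  have hn1 : d (Sum.inr 1) ≤ n := by omega
  have hn0 : d (Sum.inr 0) = n - d (Sum.inr 1) := by omega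
  rcases hcase with ⟨ha, hb⟩ | ⟨ha, hb⟩
  · refine ⟨(0, ⟨d (Sum.inr 1), by omega⟩), ?_⟩
    ext v
    rcases v with b | b <;> fin_cases b <;>
      simp [expD, Finsupp.single_apply, ha, hb, hn0]
  · refine ⟨(1, ⟨d (Sum.inr 1), by omega⟩), ?_⟩
    ext v
    rcases v with b | b <;> fin_cases b <;>
      simp [expD, Finsupp.single_apply, ha, hb, hn0]

/-- the basis monomials as elements of `bidegreeForms n`. -/
def bCell (n : ℕ) (c : Fin 2 × Fin (n+1)) : bidegreeForms n :=
  ⟨monomial (expD n c) 1,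
    (mem_weightedHomogeneousSubmodule _ _ _ _).mpr
      (isWeightedHomogeneous_monomial _ _ _ (weight_expD c))⟩

lemma bCell_indep (n : ℕ) : LinearIndependent ℂ (bCell n) := by
  have h : LinearIndependent ℂ (fun c : Fin 2 × Fin (n+1) => monomial (expD n c) (1 : ℂ)) := by
    have := (MvPolynomial.basisMonomials (Fin 2 ⊕ Fin 2) ℂ).linearIndependent.comp
      (expD n) expD_injective
    simp only [MvPolynomial.coe_basisMonomials] at this
    exact this
  exact h.of_comp (bidegreeForms n).subtype

lemma bCell_span (n : ℕ) : ⊤ ≤ Submodule.span ℂ (Set.range (bCell n)) := by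
  rintro ⟨p, hp⟩ -
  have key : p ∈ Submodule.span ℂ (Set.range fun c => monomial (expD n c) (1 : ℂ)) := by
    have hsum : (∑ d ∈ p.support, monomial d (coeff d p)) ∈
        Submodule.span ℂ (Set.range fun c => monomial (expD n c) (1 : ℂ)) := by
      apply Submodule.sum_mem
      intro d hd
      have hwd : Finsupp.weight bidegWeight d = ((1 : ℕ), n) := by
        have := (mem_weightedHomogeneousSubmodule _ _ _ _).mp hp
        exact this (MvPolynomial.mem_support_iff.mp hd)
      obtain ⟨c, rfl⟩ := exists_expD hwd
      have hmono : monomial (expD n c) (coeff (expD n c) p) =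
          (coeff (expD n c) p) • monomial (expD n c) (1 : ℂ) := by
        rw [smul_monomial, smul_eq_mul, mul_one]
      rw [hmono]
      exact Submodule.smul_mem _ _ (Submodule.subset_span ⟨c, rfl⟩)
    rwa [MvPolynomial.support_sum_monomial_coeff] at hsum
  have hmap : Submodule.map (bidegreeForms n).subtype
      (Submodule.span ℂ (Set.range (bCell n)))
      = Submodule.span ℂ (Set.range fun c => monomial (expD n c) (1 : ℂ)) := by
    rw [Submodule.map_span, ← Set.range_comp]
    rfl
  rw [← hmap] at key
  obtain ⟨q, hq, hqe⟩ := key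
  have hq' : q = ⟨p, hp⟩ := Subtype.ext hqe
  rwa [hq'] at hq

/-- basis of `bidegreeForms n` by the monomials `x_a y₀^(n-k) y₁^k`. -/
def basisB (n : ℕ) : Basis (Fin 2 × Fin (n+1)) ℂ (bidegreeForms n) :=
  Basis.mk (bCell_indep n) (bCell_span n)

lemma basisB_apply (n : ℕ) (c : Fin 2 × Fin (n+1)) :
    ((basisB n c : bidegreeForms n) : MvPolynomial (Fin 2 ⊕ Fin 2) ℂ)
      = monomial (expD n c) 1 := by
  rw [basisB, Basis.mk_apply]; rfl

instance (n : ℕ) : FiniteDimensional ℂ (bidegreeForms n) :=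
  Module.Finite.of_basis (basisB n)

lemma finrank_bidegreeForms (n : ℕ) :
    Module.finrank ℂ (bidegreeForms n) = 2 * n + 2 := by
  rw [Module.finrank_eq_card_basis (basisB n)]
  simp [Fintype.card_prod]
  ring

/-! ### Part B: the evaluation map -/

variable {m : ℕ}

/-- the `2m` points: `(i,0)` is `z i`, `(i,1)` its reflection. -/
def pt (z : Fin m → ((Fin 2 → ℂ) × (Fin 2 → ℂ))) (r : Fin m × Fin 2) :
    (Fin 2 ⊕ Fin 2) → ℂ :=
  if r.2 = 0 then Sum.elim (z r.1).1 (z r.1).2 else Sum.elim (z r.1).2 (z r.1).1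

def evalSys (n : ℕ) (z : Fin m → ((Fin 2 → ℂ) × (Fin 2 → ℂ))) :
    bidegreeForms n →ₗ[ℂ] (Fin m × Fin 2 → ℂ) :=
  LinearMap.pi fun r =>
    ((aeval (pt z r) : MvPolynomial (Fin 2 ⊕ Fin 2) ℂ →ₐ[ℂ] ℂ).toLinearMap).comp
      (bidegreeForms n).subtype

lemma evalSys_apply (n : ℕ) (z : Fin m → ((Fin 2 → ℂ) × (Fin 2 → ℂ)))
    (q : bidegreeForms n) (r : Fin m × Fin 2) :
    evalSys n z q r = aeval (pt z r) (q : MvPolynomial (Fin 2 ⊕ Fin 2) ℂ) := rfl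

lemma symmetricSystem_eq (n : ℕ) (z : Fin m → ((Fin 2 → ℂ) × (Fin 2 → ℂ))) :
    symmetricSystem n z = (LinearMap.ker (evalSys n z)).map (bidegreeForms n).subtype := by
  ext p
  simp only [symmetricSystem, Submodule.mem_inf, Submodule.mem_iInf, Submodule.mem_map,
    LinearMap.mem_ker, AlgHom.toLinearMap_apply]
  constructor
  · rintro ⟨hp, hk⟩
    refine ⟨⟨p, hp⟩, ?_, rfl⟩
    funext r
    obtain ⟨i, ρ⟩ := r
    rw [evalSys_apply]
    fin_cases ρ
    · simpa [pt] using (hk i).1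
    · simpa [pt] using (hk i).2
  · rintro ⟨⟨q, hq⟩, hker, rfl⟩
    refine ⟨hq, fun i => ⟨?_, ?_⟩⟩
    · have := congrFun hker (i, 0)
      simpa [evalSys_apply, pt] using this
    · have := congrFun hker (i, 1)
      simpa [evalSys_apply, pt] using this

def theMat (n : ℕ) (z : Fin m → ((Fin 2 → ℂ) × (Fin 2 → ℂ))) :
    Matrix (Fin m × Fin 2) (Fin 2 × Fin (n+1)) ℂ :=
  Matrix.of fun r c => eval (pt z r) (monomial (expD n c) (1 : ℂ))

lemma aeval_eq_eval' (f : (Fin 2 ⊕ Fin 2) → ℂ) (p : MvPolynomial (Fin 2 ⊕ Fin 2) ℂ) :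
    aeval f p = eval f p := by
  rw [aeval_def, Algebra.algebraMap_self, eval₂_id]

lemma toMatrix_evalSys (n : ℕ) (z : Fin m → ((Fin 2 → ℂ) × (Fin 2 → ℂ))) :
    LinearMap.toMatrix (basisB n) (Pi.basisFun ℂ (Fin m × Fin 2)) (evalSys n z)
      = theMat n z := by
  ext r c
  rw [LinearMap.toMatrix_apply, Pi.basisFun_repr, evalSys_apply, basisB_apply,
    aeval_eq_eval']
  rfl

lemma rank_submatrix_le'' {β γ : Type*} [Fintype β] [Fintype γ] [DecidableEq β] [DecidableEq γ]
    (A : Matrix (Fin m × Fin 2) (Fin 2 × Fin (n+1)) ℂ) (f : β → Fin m × Fin 2)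
    (g : γ → Fin 2 × Fin (n+1)) : (A.submatrix f g).rank ≤ A.rank := by
  have hfac : A.submatrix f g =
      ((1 : Matrix (Fin m × Fin 2) (Fin m × Fin 2) ℂ).submatrix f id * A)
        * (1 : Matrix (Fin 2 × Fin (n+1)) (Fin 2 × Fin (n+1)) ℂ).submatrix id g := by
    ext i j
    simp [Matrix.mul_apply, Matrix.one_apply, Finset.sum_ite_eq, ite_mul, mul_ite]
  rw [hfac]
  exact le_trans (Matrix.rank_mul_le_left _ _) (Matrix.rank_mul_le_right _ _)

lemma finrank_symmetricSystem (n : ℕ) (z : Fin m → ((Fin 2 → ℂ) × (Fin 2 → ℂ))) :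
    Module.finrank ℂ (symmetricSystem n z) = (2*n+2) - (theMat n z).rank := by
  rw [symmetricSystem_eq, Submodule.finrank_map_subtype_eq]
  have hr : (theMat n z).rank = Module.finrank ℂ (LinearMap.range (evalSys n z)) := by
    rw [← toMatrix_evalSys n z,
      Matrix.rank_eq_finrank_range_toLin _ (Pi.basisFun ℂ (Fin m × Fin 2)) (basisB n),
      Matrix.toLin_toMatrix]
  have hq := LinearMap.finrank_range_add_finrank_ker (evalSys n z)
  rw [finrank_bidegreeForms] at hq
  omega

lemma rank_eq_of_minor {n : ℕ} (z : Fin m → ((Fin 2 → ℂ) × (Fin 2 → ℂ)))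
    {β : Type} [Fintype β] [DecidableEq β]
    (hcard : Fintype.card β = min (2*m) (2*n+2))
    (f : β → Fin m × Fin 2) (g : β → Fin 2 × Fin (n+1))
    (hdet : ((theMat n z).submatrix f g).det ≠ 0) :
    (theMat n z).rank = min (2*m) (2*n+2) := by
  have h1 : ((theMat n z).submatrix f g).rank = Fintype.card β :=
    Matrix.rank_of_isUnit _ ((Matrix.isUnit_iff_isUnit_det _).mpr (isUnit_iff_ne_zero.mpr hdet))
  have h2 := rank_submatrix_le'' (theMat n z) f g
  have h3 := (theMat n z).rank_le_card_height
  have h4 := (theMat n z).rank_le_card_width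
  simp [Fintype.card_prod] at h3 h4
  omega

/-! ### Part C: the generic matrix of polynomials -/

def ren (m : ℕ) (r : Fin m × Fin 2) : (Fin 2 ⊕ Fin 2) → Fin m × (Fin 2 ⊕ Fin 2) :=
  fun v => (r.1, if r.2 = 0 then v else v.swap)

def polyMat (n m : ℕ) :
    Matrix (Fin m × Fin 2) (Fin 2 × Fin (n+1)) (MvPolynomial (Fin m × (Fin 2 ⊕ Fin 2)) ℂ) :=
  Matrix.of fun r c => rename (ren m r) (monomial (expD n c) (1 : ℂ))

def wz (z : Fin m → ((Fin 2 → ℂ) × (Fin 2 → ℂ))) : Fin m × (Fin 2 ⊕ Fin 2) → ℂ :=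
  fun p => Sum.elim (z p.1).1 (z p.1).2 p.2

lemma eval_polyMat (n : ℕ) (z : Fin m → ((Fin 2 → ℂ) × (Fin 2 → ℂ)))
    (r : Fin m × Fin 2) (c : Fin 2 × Fin (n+1)) :
    eval (wz z) (polyMat n m r c) = theMat n z r c := by
  rw [polyMat, theMat, Matrix.of_apply, Matrix.of_apply, eval_rename]
  have hfun : wz z ∘ ren m r = pt z r := by
    funext v
    obtain ⟨i, ρ⟩ := r
    fin_cases ρ <;> rcases v with a | a <;> simp [wz, ren, pt]
  rw [hfun]

lemma eval_det_minor (n : ℕ) (z : Fin m → ((Fin 2 → ℂ) × (Fin 2 → ℂ)))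
    {β : Type} [Fintype β] [DecidableEq β]
    (f : β → Fin m × Fin 2) (g : β → Fin 2 × Fin (n+1)) :
    eval (wz z) ((polyMat n m).submatrix f g).det
      = ((theMat n z).submatrix f g).det := by
  rw [RingHom.map_det]
  congr 1
  ext i j
  simp only [Matrix.map_apply, Matrix.submatrix_apply]
  exact eval_polyMat n z (f i) (g j)

lemma glue (n m : ℕ) {β : Type} [Fintype β] [DecidableEq β]
    (hcard : Fintype.card β = min (2*m) (2*n+2))
    (f : β → Fin m × Fin 2) (g : β → Fin 2 × Fin (n+1))
    (z₀ : Fin m → ((Fin 2 → ℂ) × (Fin 2 → ℂ)))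
    (hdet : ((theMat n z₀).submatrix f g).det ≠ 0) :
    ∃ F : MvPolynomial (Fin m × (Fin 2 ⊕ Fin 2)) ℂ, F ≠ 0 ∧
      ∀ z : Fin m → ((Fin 2 → ℂ) × (Fin 2 → ℂ)),
        MvPolynomial.eval (wz z) F ≠ 0 →
        (Module.finrank ℂ (symmetricSystem n z) : ℤ) =
          max 0 (2 * (n : ℤ) + 2 - 2 * (m : ℤ)) := by
  refine ⟨((polyMat n m).submatrix f g).det, ?_, ?_⟩
  · intro h0
    apply hdet
    rw [← eval_det_minor n z₀ f g, h0, map_zero]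
  · intro z hF
    rw [eval_det_minor n z f g] at hF
    have hrank := rank_eq_of_minor z hcard f g hF
    have hfin := finrank_symmetricSystem n z
    rw [hrank] at hfin
    rw [hfin]
    omega

/-! ### Part D: the core determinant computation -/

lemma pow_eq_pow_of_mod {ω : ℂ} {μ : ℕ} (hω : ω ^ μ = 1) {a a' : ℕ} (h : a % μ = a' % μ) :
    ω ^ a = ω ^ a' := by
  conv_lhs => rw [← Nat.div_add_mod a μ]
  conv_rhs => rw [← Nat.div_add_mod a' μ]
  rw [pow_add, pow_add, pow_mul, pow_mul, hω, one_pow, one_pow, h]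

lemma prod_expD {n : ℕ} (c : Fin 2 × Fin (n+1)) (f : (Fin 2 ⊕ Fin 2) → ℂ) :
    (expD n c).prod (fun v e => f v ^ e)
      = f (Sum.inl c.1) * (f (Sum.inr 0) ^ (n - c.2.val) * f (Sum.inr 1) ^ c.2.val) := by
  unfold expD
  rw [Finsupp.prod_add_index' (fun v => pow_zero (f v)) (fun v e e' => pow_add (f v) e e'),
    Finsupp.prod_add_index' (fun v => pow_zero (f v)) (fun v e e' => pow_add (f v) e e')]
  simp [Finsupp.prod_single_index]


lemma theMat_apply' (n : ℕ) (z : Fin m → ((Fin 2 → ℂ) × (Fin 2 → ℂ)))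
    (r : Fin m × Fin 2) (c : Fin 2 × Fin (n+1)) :
    theMat n z r c = pt z r (Sum.inl c.1)
      * (pt z r (Sum.inr 0) ^ (n - c.2.val) * pt z r (Sum.inr 1) ^ c.2.val) := by
  rw [theMat, Matrix.of_apply, eval_monomial, one_mul, prod_expD]

section Core

variable (μ b : ℕ)

def jmap (ε : Fin 2) (d : Fin μ) : ℕ := (d.val + (μ - (b + ε.val) % μ)) % μ

lemma jmap_lt (hμ0 : μ ≠ 0) (ε : Fin 2) (d : Fin μ) : jmap μ b ε d < μ :=
  Nat.mod_lt _ (Nat.pos_of_ne_zero hμ0)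

lemma jmap_mod (hμ0 : μ ≠ 0) (ε : Fin 2) (d : Fin μ) :
    (ε.val + (b + jmap μ b ε d)) % μ = d.val % μ := by
  have hpos : 0 < μ := Nat.pos_of_ne_zero hμ0
  obtain ⟨q, hq⟩ : ∃ q, μ * q + (b + ε.val) % μ = b + ε.val := ⟨_, Nat.div_add_mod _ _⟩
  have hrlt : (b + ε.val) % μ < μ := Nat.mod_lt _ hpos
  unfold jmap
  rw [show ε.val + (b + (d.val + (μ - (b + ε.val) % μ)) % μ)
      = (ε.val + b) + (d.val + (μ - (b + ε.val) % μ)) % μ from by omega,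
    Nat.add_mod_mod,
    show ε.val + b + (d.val + (μ - (b + ε.val) % μ)) = d.val + (μ * q + μ) from by omega,
    show μ * q + μ = μ * (q + 1) from by ring,
    Nat.add_mul_mod_self_left]

theorem core (n m : ℕ) (hbn : b + μ = n + 1) (hμ0 : μ ≠ 0) (hμ2 : μ ≠ 2) (hμm : μ ≤ m) :
    ∃ (f : Fin μ × Fin 2 → Fin m × Fin 2) (g : Fin μ × Fin 2 → Fin 2 × Fin (n+1))
      (z₀ : Fin m → ((Fin 2 → ℂ) × (Fin 2 → ℂ))),
      ((theMat n z₀).submatrix f g).det ≠ 0 := by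
  have hpos : 0 < μ := Nat.pos_of_ne_zero hμ0
  set ω : ℂ := Complex.exp (2 * Real.pi * Complex.I / μ) with hωdef
  have hprim : IsPrimitiveRoot ω μ := Complex.isPrimitiveRoot_exp μ hμ0
  have hω1 : ω ^ μ = 1 := hprim.pow_eq_one
  refine ⟨fun p => (⟨p.1.val, lt_of_lt_of_le p.1.2 hμm⟩, p.2),
    fun p => (p.2, ⟨b + jmap μ b p.2 p.1, by have := jmap_lt μ b hμ0 p.2 p.1; omega⟩),
    fun i => (![1, ω ^ (i : ℕ)], ![1, 2 * ω ^ (i : ℕ)]), ?_⟩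
  set z₀ : Fin m → ((Fin 2 → ℂ) × (Fin 2 → ℂ)) :=
    fun i => (![1, ω ^ (i : ℕ)], ![1, 2 * ω ^ (i : ℕ)]) with hz₀
  set Cblk : Fin μ → Matrix (Fin 2) (Fin 2) ℂ :=
    fun d => ![![2 ^ (b + jmap μ b 0 d), 2 ^ (b + jmap μ b 1 d)], ![(1 : ℂ), 2]] with hCblk
  set X : Matrix (Fin μ × Fin 2) (Fin μ × Fin 2) ℂ :=
    Matrix.kroneckerMap (· * ·) (Matrix.vandermonde fun i : Fin μ => ω ^ (i : ℕ))
      (1 : Matrix (Fin 2) (Fin 2) ℂ) with hX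
  set Y : Matrix (Fin μ × Fin 2) (Fin μ × Fin 2) ℂ :=
    (Matrix.blockDiagonal Cblk).submatrix Prod.swap Prod.swap with hY
  have hXY : ∀ p q, (X * Y) p q = ω ^ (p.1.val * q.1.val) * Cblk q.1 p.2 q.2 := by
    rintro ⟨i, ρ⟩ ⟨d, ε⟩
    rw [Matrix.mul_apply, Fintype.sum_prod_type]
    simp only [hX, hY, Matrix.kroneckerMap_apply, Matrix.submatrix_apply, Prod.swap_prod_mk,
      Matrix.blockDiagonal_apply, Matrix.vandermonde_apply, Matrix.one_apply]
    simp only [mul_ite, mul_one, mul_zero, ite_mul, zero_mul, Finset.sum_ite_eq,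
      Finset.sum_ite_eq', Finset.mem_univ, if_true, ← pow_mul]
    simp [Finset.sum_ite_eq, Finset.sum_ite_eq', ← pow_mul]
  have hentry : (theMat n z₀).submatrix
      (fun p : Fin μ × Fin 2 => ((⟨p.1.val, lt_of_lt_of_le p.1.2 hμm⟩ : Fin m), p.2))
      (fun p : Fin μ × Fin 2 =>
        ((p.2 : Fin 2), (⟨b + jmap μ b p.2 p.1, by have := jmap_lt μ b hμ0 p.2 p.1; omega⟩ : Fin (n+1))))
      = X * Y := by
    ext ⟨i, ρ⟩ ⟨d, ε⟩
    rw [hXY, Matrix.submatrix_apply, theMat_apply']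
    have hmod : (i.val * (ε.val + (b + jmap μ b ε d))) % μ = (i.val * d.val) % μ := by
      have h1 := jmap_mod μ b hμ0 ε d
      exact Nat.ModEq.mul_left i.val h1
    have hωm : ω ^ (i.val * (ε.val + (b + jmap μ b ε d))) = ω ^ (i.val * d.val) :=
      pow_eq_pow_of_mod hω1 hmod
    fin_cases ρ <;> fin_cases ε <;>
      simp only [pt, hz₀, hCblk] <;>
      simp [Matrix.cons_val_zero, Matrix.cons_val_one, mul_pow, ← pow_mul] <;>
      rw [← hωm] <;> ring_nf <;>
      simp [pow_add, pow_mul, mul_comm, mul_assoc, mul_left_comm]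
  rw [hentry, Matrix.det_mul]
  have hdetX : X.det ≠ 0 := by
    rw [hX, Matrix.det_kronecker, Matrix.det_one, one_pow, mul_one]
    apply pow_ne_zero
    rw [Matrix.det_vandermonde_ne_zero_iff]
    intro i j hij
    exact Fin.ext (hprim.pow_inj i.2 j.2 hij)
  have hdetY : Y.det ≠ 0 := by
    rw [hY,
      show (Prod.swap : Fin μ × Fin 2 → Fin 2 × Fin μ)
        = ⇑(Equiv.prodComm (Fin μ) (Fin 2)) from rfl,
      Matrix.det_submatrix_equiv_self, Matrix.det_blockDiagonal]
    rw [Finset.prod_ne_zero_iff]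
    intro d _
    rw [Matrix.det_fin_two]
    simp only [hCblk, Matrix.cons_val', Matrix.cons_val_zero, Matrix.cons_val_one,
      Matrix.head_cons, Matrix.empty_val', Matrix.cons_val_fin_one, Matrix.head_fin_const]
    intro heq
    have h2 : (2 : ℂ) ^ (b + jmap μ b 0 d + 1) = (2 : ℂ) ^ (b + jmap μ b 1 d) := by
      rw [pow_succ]
      linear_combination heq
    have hnat : b + jmap μ b 0 d + 1 = b + jmap μ b 1 d := by
      have hcast : ((2 ^ (b + jmap μ b 0 d + 1) : ℕ) : ℂ)
          = ((2 ^ (b + jmap μ b 1 d) : ℕ) : ℂ) := by push_cast; exact h2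
      exact Nat.pow_right_injective (le_refl 2) (Nat.cast_injective hcast)
    have e0 := jmap_mod μ b hμ0 0 d
    have e1 := jmap_mod μ b hμ0 1 d
    simp only [Fin.val_zero, Fin.val_one, zero_add] at e0 e1
    have heq2 : (b + jmap μ b 0 d) % μ = (b + jmap μ b 0 d + 2) % μ := by
      rw [e0, show b + jmap μ b 0 d + 2 = 1 + (b + jmap μ b 1 d) from by omega, e1]
    have hdvd : μ ∣ 2 := by
      have := (Nat.modEq_iff_dvd' (Nat.le_add_right _ 2)).mp heq2
      simpa using this
    have hle : μ ≤ 2 := Nat.le_of_dvd (by norm_num) hdvd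
    have hμ1 : μ = 1 := by omega
    have l0 := jmap_lt μ b hμ0 0 d
    have l1 := jmap_lt μ b hμ0 1 d
    omega
  exact mul_ne_zero hdetX hdetY

end Core

/-! ### Part E: the special cases -/

lemma two_pow_ne_two_pow {a a' : ℕ} (h : a ≠ a') : (2 : ℂ) ^ a ≠ (2 : ℂ) ^ a' := by
  intro hc
  apply h
  have hcast : ((2 ^ a : ℕ) : ℂ) = ((2 ^ a' : ℕ) : ℂ) := by push_cast; exact hc
  exact Nat.pow_right_injective (le_refl 2) (Nat.cast_injective hcast)

lemma case_m2 (n : ℕ) (hn : 2 ≤ n) :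
    ∃ (f : Fin 4 → Fin 2 × Fin 2) (g : Fin 4 → Fin 2 × Fin (n+1))
      (z₀ : Fin 2 → ((Fin 2 → ℂ) × (Fin 2 → ℂ))),
      ((theMat n z₀).submatrix f g).det ≠ 0 := by
  have hn0 : n ≠ 0 := by omega
  refine ⟨![(0,0),(0,1),(1,0),(1,1)],
    ![(0,⟨0, by omega⟩),(0,⟨n, by omega⟩),(1,⟨0, by omega⟩),(1,⟨n, by omega⟩)],
    ![(![1,0], ![1,1]), (![0,1], ![1,2])], ?_⟩
  have hM : (theMat n ![(![1,0], ![1,1]), (![0,1], ![1,2])]).submatrix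
      ![(0,0),(0,1),(1,0),(1,1)]
      ![(0,⟨0, by omega⟩),(0,⟨n, by omega⟩),(1,⟨0, by omega⟩),(1,⟨n, by omega⟩)]
      = !![1,1,0,0; 1,0,1,0; 0,0,1,(2:ℂ)^n; 0,1,0,2] := by
    ext i j
    fin_cases i <;> fin_cases j <;>
      simp [theMat_apply', pt, hn0, zero_pow, Nat.sub_self, Matrix.vecHead, Matrix.vecTail,
        Function.comp]
  rw [hM]
  have hne : (2:ℂ)^n ≠ 2 := by
    have := two_pow_ne_two_pow (a := n) (a' := 1) (by omega)
    simpa using this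
  have hdet : (!![1,1,0,0; 1,0,1,0; 0,0,1,(2:ℂ)^n; 0,1,0,2]).det = 2^n - 2 := by
    simp [Matrix.det_succ_row_zero, Fin.sum_univ_succ, show (Fin.succAbove 1 2 : Fin 4) = 3 from rfl]
    ring
  rw [hdet]
  intro h
  apply hne
  linear_combination h

lemma case_n1 (m : ℕ) (hm : 3 ≤ m) :
    ∃ (f : Fin 4 → Fin m × Fin 2) (g : Fin 4 → Fin 2 × Fin 2)
      (z₀ : Fin m → ((Fin 2 → ℂ) × (Fin 2 → ℂ))),
      ((theMat 1 z₀).submatrix f g).det ≠ 0 := by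
  set z₀ : Fin m → ((Fin 2 → ℂ) × (Fin 2 → ℂ)) := fun i =>
    if i.val = 0 then (![1,0], ![1,1]) else
    if i.val = 1 then (![1,1], ![1,2]) else (![1,2], ![1,3]) with hz
  refine ⟨![(⟨0, by omega⟩,0),(⟨0, by omega⟩,1),(⟨1, by omega⟩,0),(⟨2, by omega⟩,0)],
    ![(0,0),(0,1),(1,0),(1,1)], z₀, ?_⟩
  have hM : (theMat 1 z₀).submatrix
      ![(⟨0, by omega⟩,0),(⟨0, by omega⟩,1),(⟨1, by omega⟩,0),(⟨2, by omega⟩,0)]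
      ![(0,0),(0,1),(1,0),(1,1)]
      = !![1,1,0,0; 1,0,1,0; 1,2,1,2; 1,3,2,(6:ℂ)] := by
    ext i j
    fin_cases i <;> fin_cases j <;>
      simp [theMat_apply', pt, hz, Matrix.vecHead, Matrix.vecTail, Function.comp] <;> norm_num
  rw [hM]
  have hdet : (!![1,1,0,0; 1,0,1,0; 1,2,1,2; 1,3,2,(6:ℂ)]).det = -4 := by
    simp [Matrix.det_succ_row_zero, Fin.sum_univ_succ, show (Fin.succAbove 1 2 : Fin 4) = 3 from rfl]
    norm_num
  rw [hdet]
  norm_num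

end S9

/-- For `(n,m) ≠ (1,2)` and `m` general symmetric pairs
`z₁, z₁′, …, z_m, z_m′` of points of `ℙ¹ × ℙ¹`, the linear system of divisors in
`|𝒪(1,n)|` through all of these points has the expected projective dimension
`max (−1) (2n + 1 − 2m)`, i.e. the space of forms of bidegree `(1,n)` vanishing at
the points has vector space dimension `max 0 (2n + 2 − 2m)`. -/
theorem symmetric_interpolation_dimension (n m : ℕ) (hnm : (n, m) ≠ (1, 2)) :
    ∃ F : MvPolynomial (Fin m × (Fin 2 ⊕ Fin 2)) ℂ, F ≠ 0 ∧
      ∀ z : Fin m → ((Fin 2 → ℂ) × (Fin 2 → ℂ)),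
        (∀ i, (z i).1 ≠ 0 ∧ (z i).2 ≠ 0) →
        MvPolynomial.eval (fun p => Sum.elim (z p.1).1 (z p.1).2 p.2) F ≠ 0 →
        (Module.finrank ℂ ↥(symmetricSystem n z) : ℤ) =
          max 0 (2 * (n : ℤ) + 2 - 2 * (m : ℤ)) := by
  have hnm' : ¬(n = 1 ∧ m = 2) := by
    rintro ⟨h1, h2⟩; exact hnm (by rw [h1, h2])
  by_cases hm0 : m = 0
  · subst hm0
    obtain ⟨F, hF0, hF⟩ := S9.glue n 0 (β := Fin 0) (by simp)
      Fin.elim0 Fin.elim0 Fin.elim0 (by rw [Matrix.det_fin_zero]; norm_num)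
    exact ⟨F, hF0, fun z _ hz => hF z hz⟩
  rcases le_or_gt m (n+1) with hle | hlt
  · by_cases hm2 : m = 2
    · subst hm2
      have hn2 : 2 ≤ n := by
        rcases Nat.lt_or_ge n 2 with h | h
        · interval_cases n
          · omega
          · exact absurd ⟨rfl, rfl⟩ hnm'
        · exact h
      obtain ⟨f, g, z₀, hdet⟩ := S9.case_m2 n hn2
      obtain ⟨F, hF0, hF⟩ := S9.glue n 2 (β := Fin 4) (by simp; omega) f g z₀ hdet
      exact ⟨F, hF0, fun z _ hz => hF z hz⟩
    · obtain ⟨f, g, z₀, hdet⟩ := S9.core m (n+1-m) n m (by omega) hm0 hm2 le_rfl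
      obtain ⟨F, hF0, hF⟩ := S9.glue n m (β := Fin m × Fin 2)
        (by simp [Fintype.card_prod]; omega) f g z₀ hdet
      exact ⟨F, hF0, fun z _ hz => hF z hz⟩
  · by_cases hn1 : n = 1
    · subst hn1
      have hm3 : 3 ≤ m := by omega
      obtain ⟨f, g, z₀, hdet⟩ := S9.case_n1 m hm3
      obtain ⟨F, hF0, hF⟩ := S9.glue 1 m (β := Fin 4) (by simp; omega) f g z₀ hdet
      exact ⟨F, hF0, fun z _ hz => hF z hz⟩
    · obtain ⟨f, g, z₀, hdet⟩ := S9.core (n+1) 0 n m (by omega) (by omega) (by omega) (by omega)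
      obtain ⟨F, hF0, hF⟩ := S9.glue n m (β := Fin (n+1) × Fin 2)
        (by simp [Fintype.card_prod]; omega) f g z₀ hdet
      exact ⟨F, hF0, fun z _ hz => hF z hz⟩

end
end

section
/- Let Z = {z₁, z₁′, …, z_m, z_m′} be a set of m general symmetric pairs of points in ℙ¹ × ℙ¹ over ℂ, and let r be a nonnegative integer. If (n,m) ≠ (1,2), then the linear system of divisors in |𝒪_{ℙ¹×ℙ¹}(1,n)| passing through all points of Z and through r further general points of ℙ¹ × ℙ¹ has the expected projective dimension max(−1, 2n + 1 − 2m − r). -/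
/-!
# Statement 10

Let `Z = {z₁, z₁′, …, z_m, z_m′}` be a set of `m` general symmetric pairs of points
in `ℙ¹ × ℙ¹` over `ℂ`, and let `r` be a nonnegative integer.  If `(n,m) ≠ (1,2)`,
then the linear system of divisors in `|𝒪_{ℙ¹×ℙ¹}(1,n)|` passing through all points
of `Z` and through `r` further general points of `ℙ¹ × ℙ¹` has the expected
projective dimension `max (−1) (2n + 1 − 2m − r)`.

Concretely: global sections of `𝒪_{ℙ¹×ℙ¹}(1,n)` are the bihomogeneous polynomials
of bidegree `(1,n)` in the coordinates `(x₀,x₁)` of the first factor (the variables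
`Sum.inl _`) and `(y₀,y₁)` of the second factor (the variables `Sum.inr _`).  A
point of `ℙ¹ × ℙ¹` is represented by a pair of nonzero vectors in `ℂ²`, and the
linear system through the points is (the projectivization of) the subspace of such
forms vanishing at representatives of the points; its projective dimension is one
less than the `ℂ`-vector space dimension, so the expected projective dimension
`max (−1) (2n+1−2m−r)` means vector space dimension `max 0 (2n+2−2m−r)`.
"General" is spelled out: a proper Zariski-closed subset of the configuration space
`(ℙ¹ × ℙ¹)^m × (ℙ¹ × ℙ¹)^r` is contained in the zero locus of some nonzero
polynomial `F` in the homogeneous coordinates of all the points, and the conclusion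
holds whenever `F` does not vanish on the chosen representatives.
-/

noncomputable section

open MvPolynomial

/-- The linear system (as a vector subspace) of forms of bidegree `(1,n)` on
`ℙ¹ × ℙ¹` vanishing at the `m` symmetric pairs of points `z i`, `(z i)′` and at the
`r` further points `w j`. -/
def symmetricSystemWithPoints (n : ℕ) {m r : ℕ}
    (z : Fin m → ((Fin 2 → ℂ) × (Fin 2 → ℂ)))
    (w : Fin r → ((Fin 2 → ℂ) × (Fin 2 → ℂ))) :
    Submodule ℂ (MvPolynomial (Fin 2 ⊕ Fin 2) ℂ) :=
  symmetricSystem n z ⊓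
    ⨅ j : Fin r,
      LinearMap.ker ((aeval (Sum.elim (w j).1 (w j).2) :
        MvPolynomial (Fin 2 ⊕ Fin 2) ℂ →ₐ[ℂ] ℂ).toLinearMap)

namespace Stmt10

abbrev Vr := Fin 2 ⊕ Fin 2

def expPair (n : ℕ) (p : Fin 2 × Fin (n+1)) : Vr →₀ ℕ :=
  Finsupp.single (Sum.inl p.1) 1 + Finsupp.single (Sum.inr 0) (n - (p.2 : ℕ))
    + Finsupp.single (Sum.inr 1) (p.2 : ℕ)

lemma expPair_apply_inl (n : ℕ) (p : Fin 2 × Fin (n+1)) (b : Fin 2) :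
    expPair n p (Sum.inl b) = if p.1 = b then 1 else 0 := by
  simp [expPair, Finsupp.single_apply]

lemma expPair_apply_inr0 (n : ℕ) (p : Fin 2 × Fin (n+1)) :
    expPair n p (Sum.inr 0) = n - (p.2 : ℕ) := by
  simp [expPair, Finsupp.single_apply]

lemma expPair_apply_inr1 (n : ℕ) (p : Fin 2 × Fin (n+1)) :
    expPair n p (Sum.inr 1) = (p.2 : ℕ) := by
  simp [expPair, Finsupp.single_apply]

lemma expPair_injective (n : ℕ) : Function.Injective (expPair n) := by
  rintro ⟨a, j⟩ ⟨a', j'⟩ h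
  have h1 := DFunLike.congr_fun h (Sum.inl a)
  have h2 := DFunLike.congr_fun h (Sum.inr 1)
  simp only [expPair_apply_inl, expPair_apply_inr1] at h1 h2
  have ha : a' = a := by
    by_contra hc
    rw [if_neg hc] at h1
    simp at h1
  exact Prod.ext (by simp [ha]) (by simpa [Fin.ext_iff] using h2)

def mono (n : ℕ) (p : Fin 2 × Fin (n+1)) : MvPolynomial Vr ℂ := monomial (expPair n p) 1

lemma mono_eq (n : ℕ) (p : Fin 2 × Fin (n+1)) :
    mono n p = X (Sum.inl p.1) * (X (Sum.inr 0) : MvPolynomial Vr ℂ) ^ (n - (p.2 : ℕ))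
      * (X (Sum.inr 1)) ^ (p.2 : ℕ) := by
  rw [X, X_pow_eq_monomial, X_pow_eq_monomial, monomial_mul, monomial_mul, mono, expPair]
  norm_num

lemma eval_mono (n : ℕ) (p : Fin 2 × Fin (n+1)) (u v : Fin 2 → ℂ) :
    eval (Sum.elim u v) (mono n p) = u p.1 * (v 0) ^ (n - (p.2 : ℕ)) * (v 1) ^ (p.2 : ℕ) := by
  simp [mono_eq]

lemma weight_eq (d : Vr →₀ ℕ) :
    Finsupp.weight bidegWeight d
      = (d (Sum.inl 0) + d (Sum.inl 1), d (Sum.inr 0) + d (Sum.inr 1)) := by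
  rw [Finsupp.weight_apply, Finsupp.sum_fintype _ _ (by intro i; simp)]
  rw [Fintype.sum_sum_type]
  simp [Fin.sum_univ_two, bidegWeight, Prod.ext_iff]

lemma exp_char (n : ℕ) (d : Vr →₀ ℕ) (h1 : d (Sum.inl 0) + d (Sum.inl 1) = 1)
    (h2 : d (Sum.inr 0) + d (Sum.inr 1) = n) : ∃ p, d = expPair n p := by
  have hj : d (Sum.inr 1) ≤ n := by omega
  rcases (by omega : d (Sum.inl 0) = 1 ∧ d (Sum.inl 1) = 0 ∨
      d (Sum.inl 0) = 0 ∧ d (Sum.inl 1) = 1) with ⟨hA, hB⟩ | ⟨hA, hB⟩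
  · refine ⟨(0, ⟨d (Sum.inr 1), by omega⟩), ?_⟩
    ext i
    rcases i with b | b <;> fin_cases b <;>
      simp [expPair, Finsupp.single_apply, Fin.mk_zero, Fin.mk_one] <;> omega
  · refine ⟨(1, ⟨d (Sum.inr 1), by omega⟩), ?_⟩
    ext i
    rcases i with b | b <;> fin_cases b <;>
      simp [expPair, Finsupp.single_apply, Fin.mk_zero, Fin.mk_one] <;> omega

lemma expPair_weight (n : ℕ) (p : Fin 2 × Fin (n+1)) :
    Finsupp.weight bidegWeight (expPair n p) = (1, n) := by
  rw [weight_eq]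
  have hj : (p.2 : ℕ) ≤ n := by omega
  rcases p with ⟨a, j⟩
  have h0 := expPair_apply_inl n (a, j) 0
  have h1 := expPair_apply_inl n (a, j) 1
  have h2 := expPair_apply_inr0 n (a, j)
  have h3 := expPair_apply_inr1 n (a, j)
  rw [h0, h1, h2, h3]
  have : a = 0 ∨ a = 1 := by fin_cases a <;> simp
  rcases this with rfl | rfl <;> norm_num <;> omega

lemma mono_mem (n : ℕ) (p : Fin 2 × Fin (n+1)) : mono n p ∈ bidegreeForms n := by
  rw [bidegreeForms, mem_weightedHomogeneousSubmodule]
  exact isWeightedHomogeneous_monomial _ _ _ (expPair_weight n p)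

lemma span_mono_eq (n : ℕ) :
    Submodule.span ℂ (Set.range (mono n)) = bidegreeForms n := by
  apply le_antisymm
  · rw [Submodule.span_le]
    rintro x ⟨p, rfl⟩
    exact mono_mem n p
  · intro q hq
    rw [bidegreeForms, mem_weightedHomogeneousSubmodule] at hq
    have hmain : q = ∑ d ∈ q.support, monomial d (coeff d q) := (support_sum_monomial_coeff q).symm
    rw [hmain]
    apply Submodule.sum_mem
    intro d hd
    have hdeg : Finsupp.weight bidegWeight d = ((1 : ℕ), n) := hq (mem_support_iff.mp hd)
    rw [weight_eq] at hdeg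
    obtain ⟨p, rfl⟩ := exp_char n d (congrArg Prod.fst hdeg) (congrArg Prod.snd hdeg)
    have : monomial (expPair n p) (coeff (expPair n p) q) = (coeff (expPair n p) q) • mono n p := by
      rw [mono, smul_monomial, smul_eq_mul, mul_one]
    rw [this]
    exact Submodule.smul_mem _ _ (Submodule.subset_span ⟨_, rfl⟩)

lemma mono_li (n : ℕ) : LinearIndependent ℂ (mono n) := by
  have h := (basisMonomials Vr ℂ).linearIndependent.comp (expPair n) (expPair_injective n)
  have he : (⇑(basisMonomials Vr ℂ) ∘ expPair n) = mono n := by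
    funext p
    have := congrFun (coe_basisMonomials Vr ℂ) (expPair n p)
    simp only [Function.comp_apply, this, mono]
  rwa [he] at h

def bidegBasis (n : ℕ) : Module.Basis (Fin 2 × Fin (n+1)) ℂ (bidegreeForms n) :=
  (Module.Basis.span (mono_li n)).map (LinearEquiv.ofEq _ _ (span_mono_eq n))

lemma bidegBasis_coe (n : ℕ) (p : Fin 2 × Fin (n+1)) :
    (bidegBasis n p : MvPolynomial Vr ℂ) = mono n p := by
  rw [bidegBasis, Module.Basis.map_apply]
  rw [show ((LinearEquiv.ofEq _ _ (span_mono_eq n)) ((Module.Basis.span (mono_li n)) p) : MvPolynomial Vr ℂ)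
      = ((Module.Basis.span (mono_li n)) p : MvPolynomial Vr ℂ) from rfl]
  exact congrArg Subtype.val (Module.Basis.span_apply (mono_li n) p)

instance (n : ℕ) : FiniteDimensional ℂ (bidegreeForms n) :=
  Module.Finite.of_basis (bidegBasis n)

lemma finrank_bidegreeForms (n : ℕ) : Module.finrank ℂ (bidegreeForms n) = 2 * (n+1) := by
  rw [Module.finrank_eq_card_basis (bidegBasis n)]
  simp [Fintype.card_prod]

open Matrix

lemma surj_of_submatrix_det {s : ℕ} {β : Type*} [Fintype β] [DecidableEq β]
    (A : Matrix (Fin s) β ℂ) (κ : Fin s → β)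
    (hdet : (A.submatrix id κ).det ≠ 0) : Function.Surjective A.mulVecLin := by
  intro c
  set M := A.submatrix id κ with hM
  have hunit : IsUnit M.det := isUnit_iff_ne_zero.mpr hdet
  set y := M⁻¹ *ᵥ c with hy
  refine ⟨fun j => ∑ i, if κ i = j then y i else 0, ?_⟩
  ext i
  show (A *ᵥ _) i = c i
  rw [Matrix.mulVec]
  calc (fun j => A i j) ⬝ᵥ (fun j => ∑ i', if κ i' = j then y i' else 0)
      = ∑ j, ∑ i', A i j * (if κ i' = j then y i' else 0) := by
        simp [dotProduct, Finset.mul_sum]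
    _ = ∑ i', ∑ j, A i j * (if κ i' = j then y i' else 0) := Finset.sum_comm
    _ = ∑ i', A i (κ i') * y i' := by
        apply Finset.sum_congr rfl
        intro i' _
        rw [Finset.sum_eq_single (κ i')]
        · simp
        · intro bb _ hbb
          rw [if_neg fun h => hbb h.symm, mul_zero]
        · intro h; exact absurd (Finset.mem_univ _) h
    _ = (M *ᵥ y) i := by simp [Matrix.mulVec, dotProduct, hM]
    _ = c i := by
        rw [hy, Matrix.mulVec_mulVec, Matrix.mul_nonsing_inv _ hunit]
        simp

lemma ker_finrank {Mo : Type*} [AddCommGroup Mo] [Module ℂ Mo] (V : Submodule ℂ Mo)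
    {ι β : Type*} [Fintype ι] [Fintype β] [DecidableEq β] (L : ι → Mo →ₗ[ℂ] ℂ)
    (b : Module.Basis β ℂ V) (s : ℕ) (hs : s = min (Fintype.card ι) (Fintype.card β))
    (ρ : Fin s → ι) (hρ : Function.Injective ρ) (κ : Fin s → β)
    (hdet : (Matrix.of fun i j => L (ρ i) (b (κ j) : Mo)).det ≠ 0) :
    Module.finrank ℂ ↥(V ⊓ ⨅ t, LinearMap.ker (L t)) = Fintype.card β - s := by
  classical
  haveI : FiniteDimensional ℂ V := Module.Finite.of_basis b
  set D := Fintype.card β with hD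
  set A : Matrix (Fin s) β ℂ := Matrix.of fun i j => L (ρ i) (b j : Mo) with hA
  have hsub : A.submatrix id κ = Matrix.of fun i j => L (ρ i) (b (κ j) : Mo) := by
    ext i j; simp [hA]
  have hsurj : Function.Surjective A.mulVecLin :=
    surj_of_submatrix_det A κ (by rw [hsub]; exact hdet)
  set Θ : V →ₗ[ℂ] (Fin s → ℂ) := A.mulVecLin ∘ₗ (b.equivFun : V ≃ₗ[ℂ] (β → ℂ)).toLinearMap
    with hΘdef
  have hΘ : ∀ (v : V) (i : Fin s), Θ v i = L (ρ i) (v : Mo) := by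
    intro v i
    conv_rhs => rw [← b.sum_equivFun v]
    have : ((∑ j, b.equivFun v j • b j : V) : Mo) = ∑ j, b.equivFun v j • (b j : Mo) := by
      push_cast; rfl
    rw [this, map_sum]
    simp only [_root_.map_smul, smul_eq_mul]
    simp [hΘdef, Matrix.mulVecLin, Matrix.mulVec, dotProduct, hA, mul_comm]
  have hΘsurj : Function.Surjective Θ := by
    intro c
    obtain ⟨x, hx⟩ := hsurj c
    refine ⟨b.equivFun.symm x, ?_⟩
    have heq : Θ (b.equivFun.symm x) = A.mulVecLin (b.equivFun (b.equivFun.symm x)) := rfl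
    rw [heq, b.equivFun.apply_symm_apply, hx]
  have hker : Module.finrank ℂ (LinearMap.ker Θ) = D - s := by
    have hrn := LinearMap.finrank_range_add_finrank_ker Θ
    rw [LinearMap.range_eq_top.mpr hΘsurj, finrank_top] at hrn
    have h1 : Module.finrank ℂ (Fin s → ℂ) = s := by simp
    have h2 : Module.finrank ℂ V = D := by rw [Module.finrank_eq_card_basis b]
    omega
  -- identify the intersection with a submodule of V
  set W' : Submodule ℂ V := ⨅ t, LinearMap.ker ((L t).comp V.subtype) with hW'
  have hmap : (V ⊓ ⨅ t, LinearMap.ker (L t)) = W'.map V.subtype := by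
    ext x
    simp only [Submodule.mem_inf, Submodule.mem_iInf, LinearMap.mem_ker, Submodule.mem_map,
      hW', LinearMap.coe_comp, Function.comp_apply, Submodule.coe_subtype]
    constructor
    · rintro ⟨hxV, hx⟩
      exact ⟨⟨x, hxV⟩, fun t => hx t, rfl⟩
    · rintro ⟨⟨x', hx'⟩, hx, rfl⟩
      exact ⟨hx', hx⟩
  rw [hmap, Submodule.finrank_map_subtype_eq]
  have hWle : W' ≤ LinearMap.ker Θ := by
    intro v hv
    simp only [hW', Submodule.mem_iInf, LinearMap.mem_ker, LinearMap.coe_comp,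
      Function.comp_apply, Submodule.coe_subtype] at hv
    rw [LinearMap.mem_ker]
    funext i
    rw [hΘ]
    exact hv (ρ i)
  rcases le_or_gt (Fintype.card ι) D with hcase | hcase
  · have hsι : s = Fintype.card ι := by omega
    have hρbij : Function.Bijective ρ := by
      rw [Fintype.bijective_iff_injective_and_card]
      exact ⟨hρ, by simp [hsι]⟩
    have hWeq : W' = LinearMap.ker Θ := by
      refine le_antisymm hWle ?_
      intro v hv
      rw [LinearMap.mem_ker] at hv
      simp only [hW', Submodule.mem_iInf, LinearMap.mem_ker, LinearMap.coe_comp,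
        Function.comp_apply, Submodule.coe_subtype]
      intro t
      obtain ⟨i, rfl⟩ := hρbij.surjective t
      rw [← hΘ, hv]
      rfl
    rw [hWeq, hker]
  · have hsD : s = D := by omega
    have hk0 : LinearMap.ker Θ = ⊥ := by
      rw [← Submodule.finrank_eq_zero (R := ℂ) (M := V)]
      omega
    have : W' = ⊥ := le_bot_iff.mp (hk0 ▸ hWle)
    rw [this]
    simp [hsD]


abbrev Idx (m r : ℕ) := (Fin m ⊕ Fin m) ⊕ Fin r
abbrev Ω (m r : ℕ) := (Fin m ⊕ Fin r) × Vr

def sz (n m r : ℕ) : ℕ := min (2*m + r) (2*(n+1))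
def pp (n m r : ℕ) : ℕ := min m (sz n m r)
def qq (n m r : ℕ) : ℕ := min r (sz n m r - pp n m r)
def ee (n m r : ℕ) : ℕ := sz n m r - pp n m r - qq n m r

lemma sz_facts (n m r : ℕ) : pp n m r + qq n m r + ee n m r = sz n m r ∧ ee n m r ≤ m
    ∧ pp n m r ≤ m ∧ qq n m r ≤ r ∧ sz n m r ≤ 2*(n+1) ∧ ee n m r ≤ n + 1
    ∧ (ee n m r > 0 → pp n m r = m ∧ qq n m r = r) := by
  unfold ee qq pp sz; omega

def ptval {m r : ℕ} (z : Fin m → ((Fin 2 → ℂ) × (Fin 2 → ℂ)))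
    (w : Fin r → ((Fin 2 → ℂ) × (Fin 2 → ℂ))) : Idx m r → (Vr → ℂ)
  | .inl (.inl i) => Sum.elim (z i).1 (z i).2
  | .inl (.inr i) => Sum.elim (z i).2 (z i).1
  | .inr j => Sum.elim (w j).1 (w j).2

def Lf {m r : ℕ} (z : Fin m → ((Fin 2 → ℂ) × (Fin 2 → ℂ)))
    (w : Fin r → ((Fin 2 → ℂ) × (Fin 2 → ℂ))) (t : Idx m r) :
    MvPolynomial Vr ℂ →ₗ[ℂ] ℂ :=
  ((aeval (ptval z w t) : MvPolynomial Vr ℂ →ₐ[ℂ] ℂ)).toLinearMap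

lemma system_eq (n : ℕ) {m r : ℕ} (z : Fin m → ((Fin 2 → ℂ) × (Fin 2 → ℂ)))
    (w : Fin r → ((Fin 2 → ℂ) × (Fin 2 → ℂ))) :
    symmetricSystemWithPoints n z w = bidegreeForms n ⊓ ⨅ t, LinearMap.ker (Lf z w t) := by
  have : (⨅ t, LinearMap.ker (Lf z w t)) =
      ((⨅ i : Fin m, LinearMap.ker (Lf z w (.inl (.inl i)))) ⊓
        ⨅ i : Fin m, LinearMap.ker (Lf z w (.inl (.inr i)))) ⊓
        ⨅ j : Fin r, LinearMap.ker (Lf z w (.inr j)) := by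
    rw [iInf_sum, iInf_sum]
  rw [this, symmetricSystemWithPoints, symmetricSystem, iInf_inf_eq]
  simp only [Lf, ptval]
  rw [inf_assoc]

def swapc : Vr → Vr := Sum.elim Sum.inr Sum.inl

def Pv {m r : ℕ} (t : Idx m r) (c : Vr) : MvPolynomial (Ω m r) ℂ :=
  match t with
  | .inl (.inl i) => X (Sum.inl i, c)
  | .inl (.inr i) => X (Sum.inl i, swapc c)
  | .inr j => X (Sum.inr j, c)

def big {m r : ℕ} (z : Fin m → ((Fin 2 → ℂ) × (Fin 2 → ℂ)))
    (w : Fin r → ((Fin 2 → ℂ) × (Fin 2 → ℂ))) : Ω m r → ℂ :=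
  fun p => Sum.elim (fun i => Sum.elim (z i).1 (z i).2 p.2)
    (fun j => Sum.elim (w j).1 (w j).2 p.2) p.1

lemma aeval_eq_eval {σ : Type*} (f : σ → ℂ) (p : MvPolynomial σ ℂ) :
    aeval f p = eval f p := by
  rw [aeval_def, Algebra.algebraMap_self]
  rfl

lemma eval_big_aeval {m r : ℕ} (z : Fin m → ((Fin 2 → ℂ) × (Fin 2 → ℂ)))
    (w : Fin r → ((Fin 2 → ℂ) × (Fin 2 → ℂ))) (t : Idx m r) (q : MvPolynomial Vr ℂ) :
    eval (big z w) (aeval (Pv t) q) = Lf z w t q := by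
  rw [← aeval_eq_eval]
  have h2 : (fun c => aeval (big z w) (Pv t c)) = ptval z w t := by
    funext c
    rcases t with (i | i) | j <;> rcases c with a | a <;>
      simp [Pv, big, swapc, ptval, aeval_eq_eval]
  rw [comp_aeval_apply (f := Pv t) (aeval (big z w)) q, h2]
  rfl

def rho (n m r : ℕ) (i : Fin (sz n m r)) : Idx m r :=
  if h : (i : ℕ) < pp n m r then .inl (.inl ⟨i, by have := sz_facts n m r; omega⟩)
  else if h2 : (i : ℕ) < pp n m r + qq n m r then
    .inr ⟨(i : ℕ) - pp n m r, by have := sz_facts n m r; omega⟩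
  else .inl (.inr ⟨(i : ℕ) - pp n m r - qq n m r, by have := sz_facts n m r; have := i.isLt; omega⟩)

lemma rho_injective (n m r : ℕ) : Function.Injective (rho n m r) := by
  intro i i' h
  unfold rho at h
  split_ifs at h <;> simp only [Sum.inl.injEq, Sum.inr.injEq, Fin.mk.injEq] at h <;>
    (try exact absurd h (by simp)) <;> (exact Fin.ext (by omega))

def kap (n m r : ℕ) (c : Fin (sz n m r)) : Fin 2 × Fin (n+1) :=
  (⟨(c : ℕ) / (n+1), by
      have := sz_facts n m r; have := c.isLt
      exact Nat.div_lt_of_lt_mul (by omega)⟩,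
   ⟨(c : ℕ) % (n+1), Nat.mod_lt _ (by omega)⟩)

def Fpoly (n m r : ℕ) : MvPolynomial (Ω m r) ℂ :=
  (Matrix.of fun i j : Fin (sz n m r) => aeval (Pv (rho n m r i)) (mono n (kap n m r j))).det

lemma eval_Fpoly {n m r : ℕ} (z : Fin m → ((Fin 2 → ℂ) × (Fin 2 → ℂ)))
    (w : Fin r → ((Fin 2 → ℂ) × (Fin 2 → ℂ))) :
    eval (big z w) (Fpoly n m r)
      = (Matrix.of fun i j : Fin (sz n m r) =>
          Lf z w (rho n m r i) ((bidegBasis n (kap n m r j) : MvPolynomial Vr ℂ))).det := by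
  rw [Fpoly, RingHom.map_det]
  congr 1
  ext i j
  simp only [RingHom.mapMatrix_apply, Matrix.map_apply, Matrix.of_apply, RingHom.coe_coe]
  rw [eval_big_aeval, bidegBasis_coe]

lemma card_Idx (m r : ℕ) : Fintype.card (Idx m r) = 2*m + r := by
  simp [Fintype.card_sum]; ring


lemma zeta_pow_inj {N : ℕ} (hN : 0 < N) {x y : ℕ} (hx : x < N) (hy : y < N)
    (h : Complex.exp (2*Real.pi*Complex.I/N) ^ x = Complex.exp (2*Real.pi*Complex.I/N) ^ y) :
    x = y := by
  set θ : ℂ := 2*Real.pi*Complex.I/N with hθ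
  rw [← Complex.exp_nat_mul, ← Complex.exp_nat_mul, Complex.exp_eq_exp_iff_exists_int] at h
  obtain ⟨k, hk⟩ := h
  have hNC : (N:ℂ) ≠ 0 := Nat.cast_ne_zero.mpr hN.ne'
  have ht : (2*(Real.pi:ℂ)*Complex.I : ℂ) ≠ 0 := by
    simp [Real.pi_ne_zero, Complex.I_ne_zero]
  have hθ0 : θ ≠ 0 := div_ne_zero ht hNC
  have hNθ : (2*(Real.pi:ℂ)*Complex.I) = (N:ℂ) * θ := by rw [hθ, mul_div_cancel₀ _ hNC]
  rw [hNθ] at hk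
  have hk' : (x:ℂ) * θ = ((y:ℂ) + (k:ℂ)*(N:ℂ)) * θ := by rw [hk]; ring
  have h2 := mul_right_cancel₀ hθ0 hk'
  have h3 : (x:ℤ) = (y:ℤ) + k*N := by exact_mod_cast h2
  have hx' : (x:ℤ) < N := by exact_mod_cast hx
  have hy' : (y:ℤ) < N := by exact_mod_cast hy
  have hN' : (1:ℤ) ≤ N := by exact_mod_cast hN
  have hx0 : (0:ℤ) ≤ x := Nat.cast_nonneg x
  have hy0 : (0:ℤ) ≤ y := Nat.cast_nonneg y
  have hk0 : k = 0 := by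
    rcases lt_trichotomy k 0 with h0 | h0 | h0
    · have hkn : k * (N:ℤ) ≤ -N := by nlinarith
      linarith
    · exact h0
    · have hkn : (N:ℤ) ≤ k * N := by nlinarith
      linarith
  rw [hk0] at h3
  exact_mod_cast (by simpa using h3 : (x:ℤ) = y)

lemma zeta_pow_abs (N : ℕ) (x : ℕ) :
    ‖Complex.exp (2*Real.pi*Complex.I/N) ^ x‖ = 1 := by
  rw [← Complex.exp_nat_mul]
  have : ((x:ℂ) * (2*Real.pi*Complex.I/N)) = (((x:ℝ)*(2*Real.pi)/N : ℝ) : ℂ) * Complex.I := by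
    push_cast; ring
  rw [this, Complex.norm_exp_ofReal_mul_I]

def gfun (n i : ℕ) : ℕ := if i < n then i+1 else n+3
def ggfun (n i : ℕ) : ℕ := if i < n then (n+1)*(i+1) else 2*n+3

lemma gfun_pos (n i : ℕ) : 1 ≤ gfun n i := by unfold gfun; split <;> omega

lemma gfun_lt (n i : ℕ) (hn : 1 ≤ n) (hi : n ≤ i → 2 ≤ n) : gfun n i < n*(n+2) := by
  unfold gfun; split
  · nlinarith
  · have h2 : 2 ≤ n := hi (by omega)
    nlinarith

lemma ggfun_lt (n i : ℕ) (hn : 1 ≤ n) (hii : i ≤ n) (hi : n ≤ i → 2 ≤ n) :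
    ggfun n i < n*(n+2) := by
  unfold ggfun; split
  · have h1 : (n+1)*(i+1) ≤ (n+1)*n := Nat.mul_le_mul_left _ (by omega)
    nlinarith
  · have h2 : 2 ≤ n := hi (by omega)
    nlinarith

lemma gfun_inj (n i i' : ℕ) (hii : i ≤ n) (hii' : i' ≤ n) (h : gfun n i = gfun n i') : i = i' := by
  unfold gfun at h; split_ifs at h <;> omega

lemma ggfun_inj (n i i' : ℕ) (hii : i ≤ n) (hii' : i' ≤ n) (h : ggfun n i = ggfun n i') :
    i = i' := by
  unfold ggfun at h; split_ifs at h with h1 h2 h2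
  · have := Nat.eq_of_mul_eq_mul_left (show 0 < n+1 by omega) h; omega
  · rcases Nat.lt_or_ge i 2 with hc | hc
    · interval_cases i <;> omega
    · have := Nat.mul_le_mul_left (n+1) (show 3 ≤ i+1 by omega); omega
  · rcases Nat.lt_or_ge i' 2 with hc | hc
    · interval_cases i' <;> omega
    · have := Nat.mul_le_mul_left (n+1) (show 3 ≤ i'+1 by omega); omega
  · omega

lemma gfun_ne_ggfun (n i i' : ℕ) (hn : 1 ≤ n) (hii : i ≤ n) (hii' : i' ≤ n)
    (hi : n ≤ i → 2 ≤ n) : gfun n i ≠ ggfun n i' := by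
  unfold gfun ggfun; split_ifs with h1 h2 h2 <;> intro h
  · have : n+1 ≤ (n+1)*(i'+1) := Nat.le_mul_of_pos_right _ (by omega); omega
  · omega
  · have h2n : 2 ≤ n := hi (by omega)
    rcases Nat.lt_or_ge i' 1 with hc | hc
    · interval_cases i' <;> omega
    · have := Nat.mul_le_mul_left (n+1) (show 2 ≤ i'+1 by omega); omega
  · have h2n : 2 ≤ n := hi (by omega)
    omega


lemma vec_apply (x : ℂ) (a : Fin 2) : (![1, x] : Fin 2 → ℂ) a = x^(a:ℕ) := by
  fin_cases a <;> simp

lemma kap_fst (n m r : ℕ) (j : Fin (sz n m r)) :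
    (((kap n m r j).1 : Fin 2) : ℕ) = (j:ℕ)/(n+1) := rfl

lemma kap_snd (n m r : ℕ) (j : Fin (sz n m r)) :
    (((kap n m r j).2 : Fin (n+1)) : ℕ) = (j:ℕ)%(n+1) := rfl

lemma Lf_zrow {m r : ℕ} (n : ℕ) (z : Fin m → ((Fin 2 → ℂ) × (Fin 2 → ℂ)))
    (w : Fin r → ((Fin 2 → ℂ) × (Fin 2 → ℂ))) (k : Fin m) (pr : Fin 2 × Fin (n+1)) :
    Lf z w (Sum.inl (Sum.inl k)) (mono n pr)
      = (z k).1 pr.1 * ((z k).2 0)^(n-(pr.2:ℕ)) * ((z k).2 1)^(pr.2:ℕ) := by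
  show aeval (Sum.elim (z k).1 (z k).2) (mono n pr) = _
  rw [aeval_eq_eval, eval_mono]

lemma Lf_zprow {m r : ℕ} (n : ℕ) (z : Fin m → ((Fin 2 → ℂ) × (Fin 2 → ℂ)))
    (w : Fin r → ((Fin 2 → ℂ) × (Fin 2 → ℂ))) (k : Fin m) (pr : Fin 2 × Fin (n+1)) :
    Lf z w (Sum.inl (Sum.inr k)) (mono n pr)
      = (z k).2 pr.1 * ((z k).1 0)^(n-(pr.2:ℕ)) * ((z k).1 1)^(pr.2:ℕ) := by
  show aeval (Sum.elim (z k).2 (z k).1) (mono n pr) = _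
  rw [aeval_eq_eval, eval_mono]

lemma Lf_wrow {m r : ℕ} (n : ℕ) (z : Fin m → ((Fin 2 → ℂ) × (Fin 2 → ℂ)))
    (w : Fin r → ((Fin 2 → ℂ) × (Fin 2 → ℂ))) (k : Fin r) (pr : Fin 2 × Fin (n+1)) :
    Lf z w (Sum.inr k) (mono n pr)
      = (w k).1 pr.1 * ((w k).2 0)^(n-(pr.2:ℕ)) * ((w k).2 1)^(pr.2:ℕ) := by
  show aeval (Sum.elim (w k).1 (w k).2) (mono n pr) = _
  rw [aeval_eq_eval, eval_mono]

lemma det_ne_of_vandermonde {n m r : ℕ}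
    (z : Fin m → ((Fin 2 → ℂ) × (Fin 2 → ℂ))) (w : Fin r → ((Fin 2 → ℂ) × (Fin 2 → ℂ)))
    (pm : Fin (sz n m r) → ℂ) (hinj : Function.Injective pm)
    (hent : ∀ i j, Lf z w (rho n m r i) (mono n (kap n m r j)) = pm i ^ (j:ℕ)) :
    (Matrix.of fun i j : Fin (sz n m r) =>
      Lf z w (rho n m r i) (mono n (kap n m r j))).det ≠ 0 := by
  have hv : (Matrix.of fun i j : Fin (sz n m r) =>
      Lf z w (rho n m r i) (mono n (kap n m r j))) = Matrix.vandermonde pm := by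
    ext i j
    rw [Matrix.vandermonde_apply]
    exact hent i j
  rw [hv, Matrix.det_vandermonde]
  refine Finset.prod_ne_zero_iff.mpr fun i _ => Finset.prod_ne_zero_iff.mpr fun j hj => ?_
  exact sub_ne_zero.mpr fun hc => (Finset.mem_Ioi.mp hj).ne' (hinj hc)

/-! ### the witness for `n = 0` -/

def az0 (k : ℕ) : ℂ := ((2+2*k : ℕ) : ℂ)
def bz0 (k : ℕ) : ℂ := ((3+2*k : ℕ) : ℂ)
def c0 (m k : ℕ) : ℂ := ((2+2*m+2*k : ℕ) : ℂ)

def pm0 (m r : ℕ) (i : Fin (sz 0 m r)) : ℂ :=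
  if (i:ℕ) < pp 0 m r then az0 i
  else if (i:ℕ) < pp 0 m r + qq 0 m r then c0 m ((i:ℕ) - pp 0 m r)
  else bz0 ((i:ℕ) - pp 0 m r - qq 0 m r)

lemma pm0_inj (m r : ℕ) : Function.Injective (pm0 m r) := by
  intro i i' h
  have hsf := sz_facts 0 m r
  have hi := i.isLt
  have hi' := i'.isLt
  unfold pm0 az0 bz0 c0 at h
  split_ifs at h <;> rw [Nat.cast_inj] at h <;> (try exact Fin.ext (by omega)) <;> omega

lemma witness0 (m r : ℕ) :
    ∃ (z : Fin m → ((Fin 2 → ℂ) × (Fin 2 → ℂ))) (w : Fin r → ((Fin 2 → ℂ) × (Fin 2 → ℂ))),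
    (Matrix.of fun i j : Fin (sz 0 m r) =>
      Lf z w (rho 0 m r i) (mono 0 (kap 0 m r j))).det ≠ 0 := by
  refine ⟨fun k => (![1, az0 k], ![1, bz0 k]), fun k => (![1, (c0 m k)^(0+1)], ![1, c0 m k]),
    det_ne_of_vandermonde _ _ (pm0 m r) (pm0_inj m r) ?_⟩
  intro i j
  have hsf := sz_facts 0 m r
  have his := i.isLt
  unfold rho pm0
  split_ifs with h1 h2
  · rw [Lf_zrow]
    simp only [vec_apply, Matrix.cons_val_zero, Matrix.cons_val_one, Matrix.head_cons,
      one_pow, mul_one]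
    rw [kap_fst, kap_snd]
    simp [Nat.mod_one, Nat.div_one]
  · rw [Lf_wrow]
    simp only [vec_apply, Matrix.cons_val_zero, Matrix.cons_val_one, Matrix.head_cons,
      one_pow, mul_one]
    rw [kap_fst, kap_snd]
    simp [Nat.mod_one, Nat.div_one]
  · rw [Lf_zprow]
    simp only [vec_apply, Matrix.cons_val_zero, Matrix.cons_val_one, Matrix.head_cons,
      one_pow, mul_one]
    rw [kap_fst, kap_snd]
    simp [Nat.mod_one, Nat.div_one]

/-! ### the witness for `n ≥ 1` -/

def zetaC (n : ℕ) : ℂ := Complex.exp (2*Real.pi*Complex.I/((n*(n+2) : ℕ) : ℂ))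
def bzW (n m r k : ℕ) : ℂ := if k < ee n m r then zetaC n ^ gfun n k else ((2+k : ℕ) : ℂ)
def azW (n m r k : ℕ) : ℂ :=
  if k < ee n m r then zetaC n ^ ggfun n k else ((2+k : ℕ) : ℂ)^(n+1)
def cW (m k : ℕ) : ℂ := ((2+m+k : ℕ) : ℂ)

def pmW (n m r : ℕ) (i : Fin (sz n m r)) : ℂ :=
  if (i:ℕ) < pp n m r then bzW n m r i
  else if (i:ℕ) < pp n m r + qq n m r then cW m ((i:ℕ) - pp n m r)
  else azW n m r ((i:ℕ) - pp n m r - qq n m r)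

lemma zetaC_pow_N (n : ℕ) (hn : 1 ≤ n) : zetaC n ^ (n*(n+2)) = 1 := by
  rw [zetaC, ← Complex.exp_nat_mul]
  have hN : ((n*(n+2) : ℕ) : ℂ) ≠ 0 := by
    rw [Nat.cast_ne_zero]; positivity
  rw [mul_comm, div_mul_cancel₀ _ hN, Complex.exp_two_pi_mul_I]

lemma zpow_red (n : ℕ) (hn : 1 ≤ n) (a b : ℕ) :
    zetaC n ^ (a*(n*(n+2)) + b) = zetaC n ^ b := by
  rw [pow_add, pow_mul', zetaC_pow_N n hn, one_pow, one_mul]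

lemma ee_cond {n m r : ℕ} (hn : 1 ≤ n) (hnm : (n, m) ≠ (1, 2)) :
    ∀ i < ee n m r, i ≤ n ∧ (n ≤ i → 2 ≤ n) := by
  intro i hie
  have hsf := sz_facts n m r
  constructor
  · omega
  · intro hni
    by_contra hc
    have hn1 : n = 1 := by omega
    have hm2 : m ≠ 2 := fun hm => hnm (by rw [hn1, hm])
    subst hn1
    unfold ee qq pp sz at hie
    omega

lemma azW_eq (n m r : ℕ) (hn : 1 ≤ n) (hcond : ∀ i < ee n m r, i ≤ n ∧ (n ≤ i → 2 ≤ n))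
    (k : ℕ) : azW n m r k = (bzW n m r k)^(n+1) := by
  unfold azW bzW
  split_ifs with h
  · rw [← pow_mul]
    by_cases h2 : k < n
    · have hgg : ggfun n k = gfun n k * (n+1) := by
        unfold gfun ggfun; rw [if_pos h2, if_pos h2]; ring
      rw [hgg]
    · have hg : gfun n k = n+3 := by unfold gfun; rw [if_neg h2]
      have hgg : ggfun n k = 2*n+3 := by unfold ggfun; rw [if_neg h2]
      rw [hg, hgg, show (n+3)*(n+1) = 1*(n*(n+2)) + (2*n+3) by ring, zpow_red n hn]
  · rfl

lemma bzW_eq (n m r : ℕ) (hn : 1 ≤ n) (k : ℕ) (hk : k < ee n m r) :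
    bzW n m r k = (azW n m r k)^(n+1) := by
  unfold azW bzW
  rw [if_pos hk, if_pos hk, ← pow_mul]
  by_cases h2 : k < n
  · have hg : gfun n k = k+1 := by unfold gfun; rw [if_pos h2]
    have hgg : ggfun n k = (n+1)*(k+1) := by unfold ggfun; rw [if_pos h2]
    rw [hg, hgg, show (n+1)*(k+1)*(n+1) = (k+1)*(n*(n+2)) + (k+1) by ring, zpow_red n hn]
  · have hg : gfun n k = n+3 := by unfold gfun; rw [if_neg h2]
    have hgg : ggfun n k = 2*n+3 := by unfold ggfun; rw [if_neg h2]
    rw [hg, hgg, show (2*n+3)*(n+1) = 2*(n*(n+2)) + (n+3) by ring, zpow_red n hn]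

lemma zetaC_inj (n : ℕ) (hn : 1 ≤ n) {x y : ℕ} (hx : x < n*(n+2)) (hy : y < n*(n+2))
    (h : zetaC n ^ x = zetaC n ^ y) : x = y :=
  zeta_pow_inj (by positivity) hx hy h

lemma zetaC_abs (n x : ℕ) : ‖zetaC n ^ x‖ = 1 := zeta_pow_abs (n*(n+2)) x

lemma pmW_inj (n m r : ℕ) (hn : 1 ≤ n) (hcond : ∀ i < ee n m r, i ≤ n ∧ (n ≤ i → 2 ≤ n)) :
    Function.Injective (pmW n m r) := by
  have hglt : ∀ k, k < ee n m r → gfun n k < n*(n+2) :=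
    fun k hk => gfun_lt n k hn (fun hh => (hcond k hk).2 hh)
  have hgglt : ∀ k, k < ee n m r → ggfun n k < n*(n+2) :=
    fun k hk => ggfun_lt n k hn (hcond k hk).1 (fun hh => (hcond k hk).2 hh)
  have hRC : ∀ (x t : ℕ), 2 ≤ t → zetaC n ^ x ≠ (t:ℂ) := by
    intro x t ht heq
    have h1 := congrArg norm heq
    rw [zetaC_abs, Complex.norm_natCast] at h1
    have h2 : (2:ℝ) ≤ (t:ℝ) := by exact_mod_cast ht
    linarith
  intro i i' h
  have hsf := sz_facts n m r
  have hi := i.isLt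
  have hi' := i'.isLt
  unfold pmW bzW azW cW at h
  split_ifs at h
  all_goals try (rw [Nat.cast_inj] at h; exact Fin.ext (by omega))
  all_goals try (exfalso; omega)
  all_goals first
  | (exact absurd h (hRC _ _ (by omega)))
  | (exact absurd h.symm (hRC _ _ (by omega)))
  | (have hgeq := zetaC_inj n hn (hglt _ (by omega)) (hglt _ (by omega)) h
     exact Fin.ext (gfun_inj n _ _ (hcond _ (by omega)).1 (hcond _ (by omega)).1 hgeq))
  | (have hgeq := zetaC_inj n hn (hgglt _ (by omega)) (hgglt _ (by omega)) h
     have hii := ggfun_inj n _ _ (hcond _ (by omega)).1 (hcond _ (by omega)).1 hgeq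
     exact Fin.ext (by omega))
  | (have hgeq := zetaC_inj n hn (hglt _ (by omega)) (hgglt _ (by omega)) h
     exact absurd hgeq (gfun_ne_ggfun n _ _ hn (hcond _ (by omega)).1 (hcond _ (by omega)).1
       (fun hh => (hcond _ (by omega)).2 hh)))
  | (have hgeq := zetaC_inj n hn (hgglt _ (by omega)) (hglt _ (by omega)) h
     exact absurd hgeq.symm (gfun_ne_ggfun n _ _ hn (hcond _ (by omega)).1 (hcond _ (by omega)).1
       (fun hh => (hcond _ (by omega)).2 hh)))

lemma witnessW (n m r : ℕ) (hn : 1 ≤ n) (hnm : (n, m) ≠ (1, 2)) :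
    ∃ (z : Fin m → ((Fin 2 → ℂ) × (Fin 2 → ℂ))) (w : Fin r → ((Fin 2 → ℂ) × (Fin 2 → ℂ))),
    (Matrix.of fun i j : Fin (sz n m r) =>
      Lf z w (rho n m r i) (mono n (kap n m r j))).det ≠ 0 := by
  have hcond := ee_cond (m := m) (r := r) hn hnm
  refine ⟨fun k => (![1, azW n m r k], ![1, bzW n m r k]),
    fun k => (![1, (cW m k)^(n+1)], ![1, cW m k]),
    det_ne_of_vandermonde _ _ (pmW n m r) (pmW_inj n m r hn hcond) ?_⟩
  intro i j
  have hsf := sz_facts n m r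
  have his := i.isLt
  unfold rho pmW
  split_ifs with h1 h2
  · rw [Lf_zrow]
    simp only [vec_apply, Matrix.cons_val_zero, Matrix.cons_val_one, Matrix.head_cons,
      one_pow, mul_one]
    rw [azW_eq n m r hn hcond, ← pow_mul, ← pow_add, kap_fst, kap_snd]
    rw [Nat.div_add_mod]
  · rw [Lf_wrow]
    simp only [vec_apply, Matrix.cons_val_zero, Matrix.cons_val_one, Matrix.head_cons,
      one_pow, mul_one]
    rw [← pow_mul, ← pow_add, kap_fst, kap_snd, Nat.div_add_mod]
  · rw [Lf_zprow]
    simp only [vec_apply, Matrix.cons_val_zero, Matrix.cons_val_one, Matrix.head_cons,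
      one_pow, mul_one]
    rw [bzW_eq n m r hn _ (by omega), ← pow_mul, ← pow_add, kap_fst, kap_snd, Nat.div_add_mod]

lemma exists_good_points (n m r : ℕ) (hnm : (n, m) ≠ (1, 2)) :
    ∃ (z : Fin m → ((Fin 2 → ℂ) × (Fin 2 → ℂ))) (w : Fin r → ((Fin 2 → ℂ) × (Fin 2 → ℂ))),
    (Matrix.of fun i j : Fin (sz n m r) =>
      Lf z w (rho n m r i) (mono n (kap n m r j))).det ≠ 0 := by
  rcases Nat.eq_zero_or_pos n with rfl | hn
  · exact witness0 m r
  · exact witnessW n m r hn hnm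

lemma Fpoly_ne_zero (n m r : ℕ) (hnm : (n, m) ≠ (1, 2)) : Fpoly n m r ≠ 0 := by
  obtain ⟨z, w, hdet⟩ := exists_good_points n m r hnm
  intro h0
  have hev := eval_Fpoly (n := n) z w
  rw [h0, map_zero] at hev
  apply hdet
  have hmat : (Matrix.of fun i j : Fin (sz n m r) =>
      Lf z w (rho n m r i) ((bidegBasis n (kap n m r j) : MvPolynomial Vr ℂ)))
      = Matrix.of fun i j : Fin (sz n m r) =>
        Lf z w (rho n m r i) (mono n (kap n m r j)) := by
    ext i j
    simp only [Matrix.of_apply]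
    rw [bidegBasis_coe]
  rw [hmat] at hev
  exact hev.symm

theorem main_aux (n m r : ℕ) (hnm : (n, m) ≠ (1, 2)) :
    ∃ F : MvPolynomial ((Fin m ⊕ Fin r) × (Fin 2 ⊕ Fin 2)) ℂ, F ≠ 0 ∧
      ∀ (z : Fin m → ((Fin 2 → ℂ) × (Fin 2 → ℂ)))
        (w : Fin r → ((Fin 2 → ℂ) × (Fin 2 → ℂ))),
        (∀ i, (z i).1 ≠ 0 ∧ (z i).2 ≠ 0) →
        (∀ j, (w j).1 ≠ 0 ∧ (w j).2 ≠ 0) →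
        MvPolynomial.eval
          (fun p => Sum.elim (fun i => Sum.elim (z i).1 (z i).2 p.2)
            (fun j => Sum.elim (w j).1 (w j).2 p.2) p.1) F ≠ 0 →
        (Module.finrank ℂ ↥(symmetricSystemWithPoints n z w) : ℤ) =
          max 0 (2 * (n : ℤ) + 2 - 2 * (m : ℤ) - (r : ℤ)) := by
  refine ⟨Fpoly n m r, Fpoly_ne_zero n m r hnm, ?_⟩
  intro z w _ _ hF
  have hdet : (Matrix.of fun i j : Fin (sz n m r) =>
      Lf z w (rho n m r i) ((bidegBasis n (kap n m r j) : MvPolynomial Vr ℂ))).det ≠ 0 := by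
    rw [← eval_Fpoly]; exact hF
  have hrk := ker_finrank (bidegreeForms n) (Lf z w) (bidegBasis n) (sz n m r)
    (by rw [card_Idx]; simp [sz]) (rho n m r) (rho_injective n m r) (kap n m r) hdet
  rw [system_eq n z w, hrk]
  have h1 : sz n m r = min (2*m+r) (2*(n+1)) := rfl
  have h2 : Fintype.card (Fin 2 × Fin (n+1)) = 2*(n+1) := by simp [Fintype.card_prod]
  rw [h2]
  omega

end Stmt10

/-- For `(n,m) ≠ (1,2)`, `m` general symmetric pairs
`z₁, z₁′, …, z_m, z_m′` of points of `ℙ¹ × ℙ¹` and `r` further general points, the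
linear system of divisors in `|𝒪(1,n)|` through all of these points has the
expected projective dimension `max (−1) (2n + 1 − 2m − r)`, i.e. the space of forms
of bidegree `(1,n)` vanishing at the points has vector space dimension
`max 0 (2n + 2 − 2m − r)`. -/
theorem symmetric_interpolation_dimension_extra_points (n m r : ℕ)
    (hnm : (n, m) ≠ (1, 2)) :
    ∃ F : MvPolynomial ((Fin m ⊕ Fin r) × (Fin 2 ⊕ Fin 2)) ℂ, F ≠ 0 ∧
      ∀ (z : Fin m → ((Fin 2 → ℂ) × (Fin 2 → ℂ)))
        (w : Fin r → ((Fin 2 → ℂ) × (Fin 2 → ℂ))),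
        (∀ i, (z i).1 ≠ 0 ∧ (z i).2 ≠ 0) →
        (∀ j, (w j).1 ≠ 0 ∧ (w j).2 ≠ 0) →
        MvPolynomial.eval
          (fun p => Sum.elim (fun i => Sum.elim (z i).1 (z i).2 p.2)
            (fun j => Sum.elim (w j).1 (w j).2 p.2) p.1) F ≠ 0 →
        (Module.finrank ℂ ↥(symmetricSystemWithPoints n z w) : ℤ) =
          max 0 (2 * (n : ℤ) + 2 - 2 * (m : ℤ) - (r : ℤ)) :=
  Stmt10.main_aux n m r hnm

end
end
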